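/- Let Γ ⊆ ℝ²_{≥0} be a Newton-type region (convex hull of finitely many points plus ℝ²_{≥0}) not containing (1,1). Then there exists a vector e = (e₁, e₂) with e₁, e₂ coprime positive integers such that e₁ + e₂ < inf{⟨e, p⟩ : p ∈ Γ}. -/

import Mathlib

open Pointwise
/-- A Newton-type region: convex hull of finitely many points of `ℝ²≥0` plus the
positive quadrant. -/
def IsNewtonRegion (A : Set (ℝ × ℝ)) : Prop :=
  ∃ s : Finset (ℝ × ℝ), s.Nonempty ∧ (∀ p ∈ s, 0 ≤ p.1 ∧ 0 ≤ p.2) ∧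
    A = convexHull ℝ (s : Set (ℝ × ℝ)) + {p : ℝ × ℝ | 0 ≤ p.1 ∧ 0 ≤ p.2}

theorem stmt_15 (Γ : Set (ℝ × ℝ)) (hΓ : IsNewtonRegion Γ)
    (h1 : ((1 : ℝ), (1 : ℝ)) ∉ Γ) :
    ∃ e₁ e₂ : ℕ, 0 < e₁ ∧ 0 < e₂ ∧ Nat.Coprime e₁ e₂ ∧
      (e₁ : ℝ) + e₂ < sInf {x : ℝ | ∃ p ∈ Γ, x = (e₁ : ℝ) * p.1 + (e₂ : ℝ) * p.2} := by
  obtain ⟨s, hsne, hsnn, hA⟩ := hΓ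
  set Q : Set (ℝ × ℝ) := {p : ℝ × ℝ | 0 ≤ p.1 ∧ 0 ≤ p.2} with hQdef
  -- Basic facts about Q
  have hQconv : Convex ℝ Q := by
    have : Q = {p : ℝ × ℝ | 0 ≤ p.1} ∩ {p : ℝ × ℝ | 0 ≤ p.2} := by
      ext p; simp [hQdef, Set.mem_setOf_eq]
    rw [this]
    exact (convex_halfSpace_ge (LinearMap.fst ℝ ℝ ℝ).isLinear 0).inter
      (convex_halfSpace_ge (LinearMap.snd ℝ ℝ ℝ).isLinear 0)
  have hQclosed : IsClosed Q := by
    have : Q = {p : ℝ × ℝ | 0 ≤ p.1} ∩ {p : ℝ × ℝ | 0 ≤ p.2} := by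
      ext p; simp [hQdef, Set.mem_setOf_eq]
    rw [this]
    exact (isClosed_le continuous_const continuous_fst).inter
      (isClosed_le continuous_const continuous_snd)
  have hCcompact : IsCompact (convexHull ℝ (s : Set (ℝ × ℝ))) :=
    s.finite_toSet.isCompact_convexHull (𝕜 := ℝ)
  have hΓconv : Convex ℝ Γ := by
    rw [hA]; exact (convex_convexHull ℝ _).add hQconv
  have hΓclosed : IsClosed Γ := by
    rw [hA]; exact hQclosed.add_left_of_isCompact hCcompact
  -- every point of Γ has nonneg coordinates
  have hconvQ : convexHull ℝ (s : Set (ℝ × ℝ)) ⊆ Q :=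
    convexHull_min (fun p hp => hsnn p hp) hQconv
  have hΓnn : ∀ p ∈ Γ, 0 ≤ p.1 ∧ 0 ≤ p.2 := by
    intro p hp
    rw [hA] at hp
    obtain ⟨u, hu, v, hv, rfl⟩ := hp
    obtain ⟨hu1, hu2⟩ := hconvQ hu
    exact ⟨add_nonneg hu1 hv.1, add_nonneg hu2 hv.2⟩
  -- Γ is upward closed
  have hΓup : ∀ p ∈ Γ, ∀ v ∈ Q, p + v ∈ Γ := by
    intro p hp v hv
    rw [hA] at hp ⊢
    obtain ⟨u, hu, w, hw, rfl⟩ := hp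
    exact ⟨u, hu, w + v, ⟨add_nonneg hw.1 hv.1, add_nonneg hw.2 hv.2⟩, by beta_reduce; abel⟩
  -- Γ nonempty
  obtain ⟨p₀, hp₀s⟩ := hsne
  have hp₀Γ : p₀ ∈ Γ := by
    rw [hA]
    exact ⟨p₀, subset_convexHull ℝ _ hp₀s, 0, ⟨le_refl _, le_refl _⟩, by simp⟩
  -- separation
  obtain ⟨f, c, hfc, hc⟩ := geometric_hahn_banach_point_closed hΓconv hΓclosed h1
  set a : ℝ := f (1, 0) with ha
  set b : ℝ := f (0, 1) with hb
  have hf : ∀ p : ℝ × ℝ, f p = a * p.1 + b * p.2 := by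
    intro p
    have : p = p.1 • ((1 : ℝ), (0 : ℝ)) + p.2 • ((0 : ℝ), (1 : ℝ)) := by
      ext <;> simp
    rw [this, map_add, map_smul, map_smul, smul_eq_mul, smul_eq_mul, ha, hb]
    simp only [Prod.fst_add, Prod.snd_add, Prod.smul_fst, Prod.smul_snd, smul_eq_mul]
    ring
  -- a ≥ 0
  have hanondeg : 0 ≤ a := by
    by_contra hna
    push_neg at hna
    set t : ℝ := (f p₀ - c) / (-a) with ht
    have htnn : 0 ≤ t := div_nonneg (by linarith [hc p₀ hp₀Γ]) (by linarith)
    have hmem : p₀ + (t, 0) ∈ Γ := hΓup p₀ hp₀Γ (t, 0) ⟨htnn, le_refl _⟩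
    have := hc _ hmem
    rw [hf] at this
    simp only [Prod.fst_add, Prod.snd_add] at this
    have hfp : f p₀ = a * p₀.1 + b * p₀.2 := hf p₀
    have hane : -a ≠ 0 := ne_of_gt (by linarith)
    have hta : t * a = -(f p₀ - c) := by
      rw [ht]; field_simp; rw [mul_div_cancel_right₀ _ (neg_ne_zero.mp hane)]
    nlinarith [hc p₀ hp₀Γ]
  have hbnondeg : 0 ≤ b := by
    by_contra hnb
    push_neg at hnb
    set t : ℝ := (f p₀ - c) / (-b) with ht
    have htnn : 0 ≤ t := div_nonneg (by linarith [hc p₀ hp₀Γ]) (by linarith)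
    have hmem : p₀ + (0, t) ∈ Γ := hΓup p₀ hp₀Γ (0, t) ⟨le_refl _, htnn⟩
    have := hc _ hmem
    rw [hf] at this
    simp only [Prod.fst_add, Prod.snd_add] at this
    have hfp : f p₀ = a * p₀.1 + b * p₀.2 := hf p₀
    have hbne : -b ≠ 0 := ne_of_gt (by linarith)
    have htb : t * b = -(f p₀ - c) := by
      rw [ht]; field_simp; rw [mul_div_cancel_right₀ _ (neg_ne_zero.mp hbne)]
    nlinarith [hc p₀ hp₀Γ]
  have hab : a + b < c := by
    have := hfc
    rw [hf] at this
    simpa using this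
  -- rational approximations
  set δ : ℝ := (c - (a + b)) / 2 with hδ
  have hδpos : 0 < δ := by rw [hδ]; linarith
  obtain ⟨q₁, hq₁l, hq₁r⟩ := exists_rat_btwn (show a < a + δ by linarith)
  obtain ⟨q₂, hq₂l, hq₂r⟩ := exists_rat_btwn (show b < b + δ by linarith)
  have hq₁pos : 0 < q₁ := by
    have : (0 : ℝ) < (q₁ : ℝ) := lt_of_le_of_lt hanondeg hq₁l
    exact_mod_cast this
  have hq₂pos : 0 < q₂ := by
    have : (0 : ℝ) < (q₂ : ℝ) := lt_of_le_of_lt hbnondeg hq₂l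
    exact_mod_cast this
  -- key strict inequality with rationals
  have hkey : ∀ p ∈ Γ, c < (q₁ : ℝ) * p.1 + (q₂ : ℝ) * p.2 := by
    intro p hp
    obtain ⟨hp1, hp2⟩ := hΓnn p hp
    have := hc p hp
    rw [hf] at this
    nlinarith [mul_le_mul_of_nonneg_right hq₁l.le hp1,
      mul_le_mul_of_nonneg_right hq₂l.le hp2]
  have hsum : (q₁ : ℝ) + q₂ < c := by
    rw [hδ] at hq₁r hq₂r; linarith
  -- convert to coprime naturals
  set n₁ : ℕ := q₁.num.toNat * q₂.den with hn₁
  set n₂ : ℕ := q₂.num.toNat * q₁.den with hn₂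
  have hn₁pos : 0 < n₁ :=
    Nat.mul_pos (by have := Rat.num_pos.mpr hq₁pos; omega) q₂.pos
  have hn₂pos : 0 < n₂ :=
    Nat.mul_pos (by have := Rat.num_pos.mpr hq₂pos; omega) q₁.pos
  set D : ℝ := (q₁.den : ℝ) * (q₂.den : ℝ) with hD
  have hDpos : 0 < D := by
    rw [hD]
    exact mul_pos (by exact_mod_cast q₁.pos) (by exact_mod_cast q₂.pos)
  have hden₁ : ((q₁.den : ℝ)) ≠ 0 := Nat.cast_ne_zero.mpr q₁.den_nz
  have hden₂ : ((q₂.den : ℝ)) ≠ 0 := Nat.cast_ne_zero.mpr q₂.den_nz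
  have hnum₁ : ((q₁.num : ℤ) : ℝ) = (q₁ : ℝ) * q₁.den := by
    rw [Rat.cast_def]; field_simp
  have hnum₂ : ((q₂.num : ℤ) : ℝ) = (q₂ : ℝ) * q₂.den := by
    rw [Rat.cast_def]; field_simp
  have htn₁ : ((q₁.num.toNat : ℕ) : ℝ) = ((q₁.num : ℤ) : ℝ) := by
    exact_mod_cast congrArg (fun z : ℤ => (z : ℝ))
      (Int.toNat_of_nonneg (Rat.num_pos.mpr hq₁pos).le)
  have htn₂ : ((q₂.num.toNat : ℕ) : ℝ) = ((q₂.num : ℤ) : ℝ) := by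
    exact_mod_cast congrArg (fun z : ℤ => (z : ℝ))
      (Int.toNat_of_nonneg (Rat.num_pos.mpr hq₂pos).le)
  have hn₁cast : (n₁ : ℝ) = (q₁ : ℝ) * D := by
    rw [hn₁, Nat.cast_mul, htn₁, hnum₁, hD]; ring
  have hn₂cast : (n₂ : ℝ) = (q₂ : ℝ) * D := by
    rw [hn₂, Nat.cast_mul, htn₂, hnum₂, hD]; ring
  set g : ℕ := Nat.gcd n₁ n₂ with hg
  have hgpos : 0 < g := Nat.gcd_pos_of_pos_left _ hn₁pos
  refine ⟨n₁ / g, n₂ / g, Nat.div_pos (Nat.le_of_dvd hn₁pos (Nat.gcd_dvd_left _ _)) hgpos,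
    Nat.div_pos (Nat.le_of_dvd hn₂pos (Nat.gcd_dvd_right _ _)) hgpos,
    Nat.coprime_div_gcd_div_gcd hgpos, ?_⟩
  have hgR : (0 : ℝ) < (g : ℝ) := by exact_mod_cast hgpos
  have he₁ : ((n₁ / g : ℕ) : ℝ) = (q₁ : ℝ) * D / g := by
    rw [Nat.cast_div (Nat.gcd_dvd_left _ _) hgR.ne', hn₁cast]
  have he₂ : ((n₂ / g : ℕ) : ℝ) = (q₂ : ℝ) * D / g := by
    rw [Nat.cast_div (Nat.gcd_dvd_right _ _) hgR.ne', hn₂cast]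
  have hlb : ∀ x ∈ {x : ℝ | ∃ p ∈ Γ, x = ((n₁ / g : ℕ) : ℝ) * p.1 + ((n₂ / g : ℕ) : ℝ) * p.2},
      c * D / g ≤ x := by
    rintro x ⟨p, hp, rfl⟩
    rw [he₁, he₂]
    have h := (hkey p hp).le
    have h2 : c * D ≤ ((q₁ : ℝ) * p.1 + (q₂ : ℝ) * p.2) * D :=
      mul_le_mul_of_nonneg_right h hDpos.le
    calc c * D / g ≤ (((q₁ : ℝ) * p.1 + (q₂ : ℝ) * p.2) * D) / g := by
          exact (div_le_div_iff_of_pos_right hgR).mpr h2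
      _ = (q₁ : ℝ) * D / g * p.1 + (q₂ : ℝ) * D / g * p.2 := by ring
  have hne : {x : ℝ | ∃ p ∈ Γ, x = ((n₁ / g : ℕ) : ℝ) * p.1 + ((n₂ / g : ℕ) : ℝ) * p.2}.Nonempty :=
    ⟨_, p₀, hp₀Γ, rfl⟩
  have hsInf : c * D / g ≤ sInf {x : ℝ | ∃ p ∈ Γ, x = ((n₁ / g : ℕ) : ℝ) * p.1 + ((n₂ / g : ℕ) : ℝ) * p.2} :=
    le_csInf hne hlb
  refine lt_of_lt_of_le ?_ hsInf
  rw [he₁, he₂, ← add_div, div_lt_div_iff₀ hgR hgR]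
  have : ((q₁ : ℝ) + q₂) * D < c * D := mul_lt_mul_of_pos_right hsum hDpos
  nlinarith
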